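/- Fix χ > 0, γ ∈ ℝ, and 0 < α < (χ/2) e^{−(1+γ)}, and let r̃₁ₐ ∈ (r₀, ρ) be the unique solution of ψ(r) = α in (r₀, ρ). Define f(r) := χ⁻¹ exp(2α r + γ). Then for every initial value r⁽⁰⁾ ∈ (0, ρ), the iterates defined by r⁽ⁿ⁺¹⁾ := f(r⁽ⁿ⁾) converge to r̃₁ₐ as n → ∞. -/

import Mathlib

open Real Set Filter Topology

/-- Picard iteration (41): for `0 < α < (χ/2)e^{−(1+γ)}` and `r̃₁ₐ ∈ (r₀, ρ)` the unique
solution there of `ψ(r) = α`, the iterates of `f(r) := χ⁻¹ exp(2αr + γ)` starting at any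
point of `(0, ρ)` converge to `r̃₁ₐ`. -/
theorem stmt8 (χ γ α : ℝ) (hχ : 0 < χ) (hα : 0 < α)
    (hα' : α < (χ / 2) * Real.exp (-(1 + γ)))
    (r1a : ℝ) (hr1a : r1a ∈ Set.Ioo (Real.exp γ / χ) (Real.exp (γ + 1) / χ))
    (hψ : (2 * r1a)⁻¹ * (Real.log (χ * r1a) - γ) = α) :
    ∀ r0 ∈ Set.Ioo (0:ℝ) (Real.exp (γ + 1) / χ),
      Tendsto (fun n => (fun r => χ⁻¹ * Real.exp (2 * α * r + γ))^[n] r0)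
        atTop (𝓝 r1a) := by
  intro r0 hr0
  set ρ : ℝ := Real.exp (γ + 1) / χ with hρdef
  have hρpos : 0 < ρ := div_pos (Real.exp_pos _) hχ
  set f : ℝ → ℝ := fun r => χ⁻¹ * Real.exp (2 * α * r + γ) with hfdef
  set k : ℝ := 2 * α * ρ with hkdef
  have hk0 : 0 ≤ k := by positivity
  have hk1 : k < 1 := by
    have h2 : 2 * α < χ * Real.exp (-(1 + γ)) := by
      have := hα'
      nlinarith [Real.exp_pos (-(1 + γ))]
    have : 2 * α * ρ < χ * Real.exp (-(1 + γ)) * ρ :=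
      mul_lt_mul_of_pos_right h2 hρpos
    have hone : χ * Real.exp (-(1 + γ)) * ρ = 1 := by
      rw [hρdef]
      rw [Real.exp_neg]
      have h1γ : γ + 1 = 1 + γ := by ring
      rw [h1γ]
      field_simp
    linarith
  have hr1a_pos : 0 < r1a := lt_trans (div_pos (Real.exp_pos _) hχ) hr1a.1
  -- fixed point
  have hfix : f r1a = r1a := by
    have hlog : Real.log (χ * r1a) = 2 * α * r1a + γ := by
      have h2r : (2 * r1a) ≠ 0 := by positivity
      field_simp at hψ
      rw [mul_comm r1a χ] at hψ
      linarith
    have hexp : Real.exp (2 * α * r1a + γ) = χ * r1a := by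
      rw [← hlog, Real.exp_log (by positivity)]
    simp only [hfdef, hexp]
    field_simp
  -- invariance of [0, ρ]
  have hmaps : ∀ r ∈ Icc (0:ℝ) ρ, f r ∈ Icc (0:ℝ) ρ := by
    intro r hr
    constructor
    · positivity
    · have h1 : 2 * α * r ≤ k := by
        rw [hkdef]
        exact mul_le_mul_of_nonneg_left hr.2 (by positivity)
      have h2 : 2 * α * r + γ ≤ γ + 1 := by linarith
      calc χ⁻¹ * Real.exp (2 * α * r + γ) ≤ χ⁻¹ * Real.exp (γ + 1) :=
            mul_le_mul_of_nonneg_left (Real.exp_le_exp.mpr h2) (by positivity)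
        _ = ρ := by rw [hρdef]; field_simp
  -- one-sided Lipschitz estimate
  have hstep : ∀ x ∈ Icc (0:ℝ) ρ, ∀ y ∈ Icc (0:ℝ) ρ, x ≤ y → f y - f x ≤ k * (y - x) := by
    intro x hx y hy hxy
    set A := 2 * α * y + γ with hA
    set B := 2 * α * x + γ with hB
    have hBA : B ≤ A := by
      simp only [hA, hB]
      nlinarith
    have hkey : Real.exp A - Real.exp B ≤ Real.exp A * (A - B) := by
      have h := Real.add_one_le_exp (B - A)
      have hEA := Real.exp_pos A
      have : Real.exp B = Real.exp A * Real.exp (B - A) := by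
        rw [← Real.exp_add]; ring_nf
      nlinarith
    have hfyρ : f y ≤ ρ := (hmaps y hy).2
    have : f y - f x = χ⁻¹ * (Real.exp A - Real.exp B) := by
      simp only [hfdef]; ring
    rw [this]
    have h1 : χ⁻¹ * (Real.exp A - Real.exp B) ≤ χ⁻¹ * (Real.exp A * (A - B)) :=
      mul_le_mul_of_nonneg_left hkey (by positivity)
    have h2 : χ⁻¹ * (Real.exp A * (A - B)) = f y * (2 * α * (y - x)) := by
      simp only [hfdef, hA, hB]; ring
    have h3 : f y * (2 * α * (y - x)) ≤ ρ * (2 * α * (y - x)) := by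
      apply mul_le_mul_of_nonneg_right hfyρ
      nlinarith
    have h4 : ρ * (2 * α * (y - x)) = k * (y - x) := by rw [hkdef]; ring
    linarith
  have hmono : ∀ x ∈ Icc (0:ℝ) ρ, ∀ y ∈ Icc (0:ℝ) ρ, x ≤ y → f x ≤ f y := by
    intro x _ y _ hxy
    simp only [hfdef]
    apply mul_le_mul_of_nonneg_left _ (by positivity)
    apply Real.exp_le_exp.mpr
    nlinarith
  have hLip : ∀ x ∈ Icc (0:ℝ) ρ, ∀ y ∈ Icc (0:ℝ) ρ, |f x - f y| ≤ k * |x - y| := by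
    intro x hx y hy
    rcases le_total x y with h | h
    · rw [abs_sub_comm, abs_of_nonneg (by linarith [hmono x hx y hy h]),
        abs_sub_comm, abs_of_nonneg (by linarith)]
      exact hstep x hx y hy h
    · rw [abs_of_nonneg (by linarith [hmono y hy x hx h]), abs_of_nonneg (by linarith)]
      exact hstep y hy x hx h
  have hr1aIcc : r1a ∈ Icc (0:ℝ) ρ := ⟨le_of_lt hr1a_pos, le_of_lt hr1a.2⟩
  -- induction
  have hn : ∀ n, f^[n] r0 ∈ Icc (0:ℝ) ρ ∧ |f^[n] r0 - r1a| ≤ k ^ n * |r0 - r1a| := by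
    intro n
    induction n with
    | zero => simp [le_of_lt hr0.1, le_of_lt hr0.2]
    | succ n ih =>
      obtain ⟨hmem, hdist⟩ := ih
      rw [Function.iterate_succ_apply']
      refine ⟨hmaps _ hmem, ?_⟩
      calc |f (f^[n] r0) - r1a| = |f (f^[n] r0) - f r1a| := by rw [hfix]
        _ ≤ k * |f^[n] r0 - r1a| := hLip _ hmem _ hr1aIcc
        _ ≤ k * (k ^ n * |r0 - r1a|) := mul_le_mul_of_nonneg_left hdist hk0
        _ = k ^ (n + 1) * |r0 - r1a| := by ring
  -- conclude
  have htend : Tendsto (fun n => k ^ n * |r0 - r1a|) atTop (𝓝 0) := by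
    simpa using (tendsto_pow_atTop_nhds_zero_of_lt_one hk0 hk1).mul_const |r0 - r1a|
  rw [tendsto_iff_dist_tendsto_zero]
  apply squeeze_zero (fun n => dist_nonneg) (fun n => ?_) htend
  rw [Real.dist_eq]
  exact (hn n).2
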